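/- Let P, Q ∈ Γ_n with 0 < r ≤ p_i/q_i ≤ R for all i and 0 < r < 1 < R. Then the triangular discrimination satisfies Δ(P||Q) = ∑(p_i−q_i)²/(p_i+q_i) ≤ 2(R−1)(1−r)/((R+1)(r+1)) ≤ (R−r)²(R+r+2)/((R+1)²(r+1)²). -/
import Mathlib


theorem triangular_bounds (n : ℕ) (hn : 2 ≤ n) (p q : Fin n → ℝ)
    (hp : ∀ i, 0 < p i) (hq : ∀ i, 0 < q i)
    (hps : ∑ i, p i = 1) (hqs : ∑ i, q i = 1)
    (r R : ℝ) (hr : 0 < r) (hr1 : r < 1) (h1R : 1 < R)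
    (hbound : ∀ i, r ≤ p i / q i ∧ p i / q i ≤ R) :
    (∑ i, (p i - q i) ^ 2 / (p i + q i)) ≤
      2 * (R - 1) * (1 - r) / ((R + 1) * (r + 1)) ∧
    2 * (R - 1) * (1 - r) / ((R + 1) * (r + 1)) ≤
      (R - r) ^ 2 * (R + r + 2) / ((R + 1) ^ 2 * (r + 1) ^ 2) := by
  have hR0 : (0:ℝ) < R + 1 := by linarith
  have hr0 : (0:ℝ) < r + 1 := by linarith
  have hRr : (0:ℝ) < R - r := by linarith
  set A : ℝ := (1 - r)^2 / (1 + r) with hA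
  set B : ℝ := (R - 1)^2 / (R + 1) with hB
  set β : ℝ := (B - A) / (R - r) with hβ
  set α : ℝ := A - β * r with hα
  have hβ1 : β ≤ 1 := by
    rw [hβ, div_le_one hRr, hB, hA,
      div_sub_div _ _ (by linarith : (R:ℝ)+1 ≠ 0) (by linarith : (1:ℝ)+r ≠ 0),
      div_le_iff₀ (by positivity)]
    nlinarith [hr.le, hr1.le]
  have key : ∀ i, (p i - q i)^2 / (p i + q i) ≤ α * q i + β * p i := by
    intro i
    have hqi := hq i; have hpi := hp i
    have h1 : r * q i ≤ p i := by
      have := (hbound i).1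
      rw [le_div_iff₀ hqi] at this; linarith
    have h2 : p i ≤ R * q i := by
      have := (hbound i).2
      rw [div_le_iff₀ hqi] at this; linarith
    rw [div_le_iff₀ (by linarith)]
    have hid : (α * q i + β * p i) * (p i + q i) - (p i - q i)^2
        = (1 - β) * (p i - r * q i) * (R * q i - p i) := by
      rw [hα, hβ, hB, hA]
      field_simp
      ring
    nlinarith [mul_nonneg (mul_nonneg (sub_nonneg.2 hβ1) (sub_nonneg.2 h1))
      (sub_nonneg.2 h2)]
  have hsum : ∑ i, (p i - q i)^2 / (p i + q i) ≤ α + β := by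
    calc ∑ i, (p i - q i)^2 / (p i + q i)
        ≤ ∑ i, (α * q i + β * p i) := Finset.sum_le_sum (fun i _ => key i)
      _ = α * ∑ i, q i + β * ∑ i, p i := by
          rw [Finset.sum_add_distrib, Finset.mul_sum, Finset.mul_sum]
      _ = α + β := by rw [hps, hqs]; ring
  have hval : α + β = 2 * (R - 1) * (1 - r) / ((R + 1) * (r + 1)) := by
    rw [hα, hβ, hB, hA]
    field_simp
    ring
  constructor
  · calc (∑ i, (p i - q i) ^ 2 / (p i + q i)) ≤ α + β := hsum
      _ = _ := hval
  · have h6 : 2 * (R - 1) * (1 - r) * ((R + 1) * (r + 1))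
        ≤ (R - r)^2 * (R + r + 2) := by
      nlinarith [mul_pos (sub_pos.2 h1R) (sub_pos.2 hr1),
        mul_nonneg (sq_nonneg (R - 1)) (by linarith : (0:ℝ) ≤ 1 + 3*r),
        mul_nonneg (mul_nonneg (sub_pos.2 h1R).le (sq_nonneg (1 - r)))
          (by norm_num : (0:ℝ) ≤ 3),
        mul_nonneg (sq_nonneg (1 - r)) (by linarith : (0:ℝ) ≤ 3 + r),
        mul_nonneg (sq_nonneg (R - 1)) (sq_nonneg (1 - r)),
        mul_nonneg (mul_nonneg (sub_pos.2 h1R).le (sub_pos.2 h1R).le)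
          (sub_pos.2 h1R).le]
    rw [div_le_div_iff₀ (by positivity) (by positivity)]
    have h7 := mul_le_mul_of_nonneg_right h6 (mul_pos hR0 hr0).le
    nlinarith [h7]
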